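/- Let f < 0, b < 0, and C be real numbers, and define φ(η) = √(f/b)·tanh(√(−f/2)·η + C). Then φ satisfies φ·φ'' = f·φ² − b·φ⁴ for all η ∈ ℝ. -/

import Mathlib

lemma tanh_hasDerivAt (x : ℝ) : HasDerivAt Real.tanh (1 - Real.tanh x ^ 2) x := by
  have hc : Real.cosh x ≠ 0 := ne_of_gt (Real.cosh_pos x)
  have h := (Real.hasDerivAt_sinh x).div (Real.hasDerivAt_cosh x) hc
  have heq : (Real.cosh x * Real.cosh x - Real.sinh x * Real.sinh x) / Real.cosh x ^ 2
      = 1 - Real.tanh x ^ 2 := by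
    rw [Real.tanh_eq_sinh_div_cosh]
    have h1 : Real.cosh x ^ 2 - Real.sinh x ^ 2 = 1 := Real.cosh_sq_sub_sinh_sq x
    field_simp
  have : (Real.sinh / Real.cosh) = Real.tanh := by
    funext y; rw [Real.tanh_eq_sinh_div_cosh]; rfl
  rw [this, heq] at h
  exact h

lemma phi_deriv (A k C : ℝ) :
    deriv (fun η => A * Real.tanh (k * η + C))
      = fun η => A * k * (1 - Real.tanh (k * η + C) ^ 2) := by
  funext x
  have h : HasDerivAt (fun η => A * Real.tanh (k * η + C))
      (A * k * (1 - Real.tanh (k * x + C) ^ 2)) x := by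
    have h1 : HasDerivAt (fun η : ℝ => k * η + C) k x := by
      simpa using ((hasDerivAt_id x).const_mul k).add_const C
    have h2 := (tanh_hasDerivAt (k * x + C)).comp x h1
    have h3 := h2.const_mul A
    exact h3.congr_deriv (by ring)
  exact h.deriv

/-- `φ = √(f/b) tanh(√(−f/2) η + C)` solves `φφ²'' = fφ² − bφ⁴`. -/
theorem stmt_15 (f b C : ℝ) (hf : f < 0) (hb : b < 0) :
    ∀ η : ℝ,
      (fun η => Real.sqrt (f / b) * Real.tanh (Real.sqrt (-f / 2) * η + C)) η
          * deriv (deriv (fun η =>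
              Real.sqrt (f / b) * Real.tanh (Real.sqrt (-f / 2) * η + C))) η
        = f * ((fun η =>
              Real.sqrt (f / b) * Real.tanh (Real.sqrt (-f / 2) * η + C)) η) ^ 2
          - b * ((fun η =>
              Real.sqrt (f / b) * Real.tanh (Real.sqrt (-f / 2) * η + C)) η) ^ 4 := by
  intro η
  set A := Real.sqrt (f / b) with hA
  set k := Real.sqrt (-f / 2) with hk
  have hA2 : A ^ 2 = f / b := Real.sq_sqrt (by rw [div_nonneg_iff]; right; exact ⟨hf.le, hb.le⟩)
  have hk2 : k ^ 2 = -f / 2 := Real.sq_sqrt (by linarith)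
  simp only
  rw [phi_deriv A k C]
  -- second derivative
  have h2 : deriv (fun η => A * k * (1 - Real.tanh (k * η + C) ^ 2)) η
      = A * k * (-(2 * Real.tanh (k * η + C) * ((1 - Real.tanh (k * η + C) ^ 2) * k))) := by
    have h1 : HasDerivAt (fun η : ℝ => k * η + C) k η := by
      simpa using ((hasDerivAt_id η).const_mul k).add_const C
    have ht := (tanh_hasDerivAt (k * η + C)).comp η h1
    have hsq := ht.pow 2
    have h3 : HasDerivAt (fun η => 1 - Real.tanh (k * η + C) ^ 2)
        (-(2 * Real.tanh (k * η + C) ^ (2-1) * ((1 - Real.tanh (k * η + C) ^ 2) * k))) η :=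
      (hasDerivAt_const η (1:ℝ)).sub hsq |>.congr_deriv (by simp [Function.comp])
    have h4 := h3.const_mul (A * k)
    rw [h4.deriv]
    ring
  rw [h2]
  set t := Real.tanh (k * η + C)
  have hb0 : b ≠ 0 := ne_of_lt hb
  have e : A * t * (A * k * -(2 * t * ((1 - t ^ 2) * k)))
      = -2 * (A^2) * (k^2) * (t^2) * (1 - t^2) := by ring
  have hA4 : A ^ 4 = (f / b) ^ 2 := by rw [show A^4 = (A^2)^2 by ring, hA2]
  rw [e, hA2, hk2]
  rw [show f * (A * t) ^ 2 - b * (A * t) ^ 4 = f * A^2 * t^2 - b * A^4 * t^4 by ring, hA2, hA4]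
  field_simp
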